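/- The real number arctan(1/2)/π is irrational. -/

import Mathlib

open Real Complex

lemma aux_pow : ∀ n : ℕ, 1 ≤ n → ∃ a b : ℤ,
    ((2 : ℂ) + Complex.I) ^ n = (a : ℂ) + (b : ℂ) * Complex.I ∧
      (a % 5 = 2 ∧ b % 5 = 1 ∨ a % 5 = 3 ∧ b % 5 = 4) := by
  intro n hn
  induction n, hn using Nat.le_induction with
  | base => exact ⟨2, 1, by norm_num, by norm_num⟩
  | succ n hn ih =>
    obtain ⟨a, b, heq, hmod⟩ := ih
    refine ⟨2 * a - b, a + 2 * b, ?_, by omega⟩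
    rw [pow_succ, heq]
    push_cast
    ring_nf
    rw [Complex.I_sq]
    ring

/-- The real number `arctan(1/2)/π` is irrational. -/
theorem stmt6 : Irrational (Real.arctan (1 / 2) / Real.pi) := by
  rintro ⟨q, hq⟩
  have hπ : Real.pi ≠ 0 := Real.pi_ne_zero
  have harc : Real.arctan (1 / 2) = (q : ℝ) * Real.pi := by
    field_simp at hq
    linarith [hq]
  have key : (q.den : ℝ) * Real.arctan (1 / 2) = (q.num : ℝ) * Real.pi := by
    have hd : (q.den : ℝ) ≠ 0 := by positivity
    have hnum : ((q.num : ℝ)) = (q : ℝ) * (q.den : ℝ) := by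
      rw [Rat.cast_def]; field_simp
    rw [harc, hnum]; ring
  -- trig values
  have hs5 : Real.sqrt 5 ≠ 0 := by positivity
  have h54 : Real.sqrt (1 + (1/2 : ℝ) ^ 2) = Real.sqrt 5 / 2 := by
    rw [show (1 : ℝ) + (1/2) ^ 2 = 5 / 4 by norm_num,
      Real.sqrt_div (by norm_num : (0:ℝ) ≤ 5),
      show (4 : ℝ) = 2 ^ 2 by norm_num,
      Real.sqrt_sq (by norm_num : (0:ℝ) ≤ 2)]
  have hcos : Real.cos (Real.arctan (1/2)) = 2 / Real.sqrt 5 := by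
    rw [Real.cos_arctan, h54]; field_simp
  have hsin : Real.sin (Real.arctan (1/2)) = 1 / Real.sqrt 5 := by
    rw [Real.sin_arctan, h54]; field_simp
  -- decomposition of 2 + I
  have hz : (2 : ℂ) + Complex.I
      = (Real.sqrt 5 : ℂ) * Complex.exp ((Real.arctan (1/2) : ℂ) * Complex.I) := by
    rw [Complex.exp_mul_I, ← Complex.ofReal_cos, ← Complex.ofReal_sin, hcos, hsin]
    have h5 : (Real.sqrt 5 : ℂ) ≠ 0 := Complex.ofReal_ne_zero.mpr hs5
    push_cast
    field_simp
  have hsin0 : Real.sin ((q.num : ℝ) * Real.pi) = 0 := Real.sin_int_mul_pi q.num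
  have him : (((2 : ℂ) + Complex.I) ^ q.den).im = 0 := by
    rw [hz, mul_pow, ← Complex.exp_nat_mul]
    have step : ((q.den : ℂ)) * ((Real.arctan (1/2) : ℂ) * Complex.I)
        = (((q.den : ℝ) * Real.arctan (1/2) : ℝ) : ℂ) * Complex.I := by
      push_cast; ring
    rw [step, key, Complex.exp_mul_I, ← Complex.ofReal_cos, ← Complex.ofReal_sin, hsin0]
    rw [Complex.ofReal_zero, zero_mul, add_zero, ← Complex.ofReal_pow,
      ← Complex.ofReal_mul, Complex.ofReal_im]
  obtain ⟨a, b, heq, hmod⟩ := aux_pow q.den q.pos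
  rw [heq] at him
  simp at him
  have : b ≠ 0 := by omega
  exact this (by exact_mod_cast him)
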